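/- Let tr be the Markov trace. For every integer k ≥ 1, the following identity holds: tr(π(t_1^k)) = (q−1)^2 · Σ_{j=0}^{k−2} Σ_{φ=0}^{k−2−j} q^{j+φ} · tr(π(t^{j+1+φ} t_1^{k−1−j−φ})) + k(q−1) q^{k−1} z · tr(π(t^k)) + q^k · tr(π(t^k)), where t, t_1 ∈ B_{1,2}. -/

import Mathlib

set_option synthInstance.maxHeartbeats 1000000
set_option maxHeartbeats 2000000

namespace MB

/-! ## The mixed braid group `B_{1,n}` (with `m = n - 1` braiding generators) -/

/-- Generators: `none` is the looping generator `t`, `some i` is `σ_{i+1}` for `i : Fin m`. -/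
abbrev MBGen (m : ℕ) := Option (Fin m)

/-- The relators of the mixed braid group `B_{1,n}` (`m = n-1`):
`σ₁tσ₁t = tσ₁tσ₁`; `tσ_i = σ_i t` for `i > 1`; the braid relations among the `σ_i`. -/
def rels (m : ℕ) : Set (FreeGroup (MBGen m)) :=
  { r | (∃ h : 0 < m,
          r = (FreeGroup.of (some ⟨0, h⟩) * FreeGroup.of none) ^ 2 *
              ((FreeGroup.of (none : MBGen m) * FreeGroup.of (some ⟨0, h⟩)) ^ 2)⁻¹) ∨
        (∃ i : Fin m, 1 ≤ (i : ℕ) ∧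
          r = FreeGroup.of (none : MBGen m) * FreeGroup.of (some i) *
              (FreeGroup.of (some i) * FreeGroup.of (none : MBGen m))⁻¹) ∨
        (∃ i j : Fin m, (i : ℕ) + 1 = (j : ℕ) ∧
          r = FreeGroup.of (some i) * FreeGroup.of (some j) * FreeGroup.of (some i) *
              (FreeGroup.of (some j) * FreeGroup.of (some i) * FreeGroup.of (some j))⁻¹) ∨
        (∃ i j : Fin m, (i : ℕ) + 1 < (j : ℕ) ∧
          r = FreeGroup.of (some i) * FreeGroup.of (some j) *
              (FreeGroup.of (some j) * FreeGroup.of (some i))⁻¹) }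

/-- The mixed braid group `B_{1,n}` with `n = m+1` moving strands. -/
abbrev B (m : ℕ) := PresentedGroup (rels m)

/-- The braiding generator `σ_{i+1}`, for `i : Fin m`. -/
def σ {m : ℕ} (i : Fin m) : B m := PresentedGroup.of (some i)

/-- The looping generator `t`. -/
def τ {m : ℕ} : B m := PresentedGroup.of none

/-- `σ_j` in one-based indexing (`1 ≤ j ≤ m`), junk value `1` out of range. -/
def sig {m : ℕ} (j : ℕ) : B m :=
  if h : 1 ≤ j ∧ j - 1 < m then σ ⟨j - 1, h.2⟩ else 1

/-- The looping elements `t_i = σ_i ⋯ σ_1 t σ_1 ⋯ σ_i` (for `0 ≤ i ≤ m`), via `t_0 = t`,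
`t_{j+1} = σ_{j+1} t_j σ_{j+1}`. -/
def tt {m : ℕ} : ℕ → B m
  | 0 => τ
  | (j+1) => sig (j+1) * tt j * sig (j+1)

/-- The looping elements `t′_i = σ_i ⋯ σ_1 t σ_1⁻¹ ⋯ σ_i⁻¹` (for `0 ≤ i ≤ m`), via `t′_0 = t`,
`t′_{j+1} = σ_{j+1} t′_j σ_{j+1}⁻¹`. -/
def tp {m : ℕ} : ℕ → B m
  | 0 => τ
  | (j+1) => sig (j+1) * tp j * (sig (j+1))⁻¹

/-! ## The generalized Iwahori–Hecke algebra of type B, `H_{1,n}(q)` -/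

/-- The ground ring `R = ℂ[q^{±1}]` of Laurent polynomials. -/
abbrev R : Type := LaurentPolynomial ℂ

instance : IsDomain R := NoZeroDivisors.to_isDomain _

/-- The variable `q ∈ R`. -/
noncomputable def qq : R := LaurentPolynomial.T 1

/-- The quadratic Hecke relations `σ_i² = (q-1)σ_i + q`. -/
inductive heckeRel (m : ℕ) :
    MonoidAlgebra R (B m) → MonoidAlgebra R (B m) → Prop
  | quad (i : Fin m) : heckeRel m
      (MonoidAlgebra.of R (B m) (σ i) * MonoidAlgebra.of R (B m) (σ i))
      ((qq - 1) • MonoidAlgebra.of R (B m) (σ i) + qq • (1 : MonoidAlgebra R (B m)))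

/-- The generalized Iwahori–Hecke algebra of type B, `H_{1,n}(q)` (`n = m+1`), as the quotient
of the group algebra `R[B_{1,n}]` by the two-sided ideal generated by the quadratic relations. -/
abbrev H (m : ℕ) := RingQuot (heckeRel m)

/-- The canonical multiplicative map `π : B_{1,n} → H_{1,n}(q)`. -/
noncomputable def pih (m : ℕ) : B m →* H m :=
  (RingQuot.mkRingHom (heckeRel m)).toMonoidHom.comp (MonoidAlgebra.of R (B m))

/-- The subalgebra `H_n(q)` of `H_{1,n}(q)` generated by the images `g_1, …, g_{n-1}`
of `σ_1, …, σ_{n-1}`. -/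
noncomputable def HA (m : ℕ) : Subalgebra R (H m) :=
  Algebra.adjoin R (Set.range fun i : Fin m => pih m (σ i))

/-! ## The trace field `F` -/

/-- Polynomials over `R` in the variables `z` (= `X none`) and `s_k`, `k ∈ ℤ` (= `X (some k)`). -/
abbrev P : Type := MvPolynomial (Option ℤ) R

/-- The field of fractions `F` of `P`. -/
abbrev F : Type := FractionRing P

/-- The variable `z ∈ F`. -/
noncomputable def zF : F := algebraMap P F (MvPolynomial.X none)

/-- The variable `s_k ∈ F`, for `k ∈ ℤ`. -/
noncomputable def sF (k : ℤ) : F := algebraMap P F (MvPolynomial.X (some k))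

/-- The image of `q` in `F`. -/
noncomputable def qF : F := algebraMap R F qq

/-! ## The natural inclusions and the Markov trace -/

/-- `ι : B_{1,n} → B_{1,n+1}` is the natural inclusion: it sends `t ↦ t` and `σ_i ↦ σ_i`. -/
def IsGrpIncl {m : ℕ} (ι : B m →* B (m+1)) : Prop :=
  ι τ = τ ∧ ∀ i : Fin m, ι (σ i) = σ i.castSucc

/-- `f : H_{1,n}(q) → H_{1,n+1}(q)` is the natural inclusion: it is induced by the natural
inclusion `B_{1,n} → B_{1,n+1}`. -/
def IsInclusion {m : ℕ} (f : H m →ₐ[R] H (m+1)) : Prop :=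
  ∃ ι : B m →* B (m+1), IsGrpIncl ι ∧ ∀ x : B m, f (pih m x) = pih (m+1) (ι x)

/-- The Markov trace rules for a family of `R`-linear maps `tr : H_{1,n}(q) → F`:
compatibility with the natural inclusions, `tr(ab) = tr(ba)`, `tr(1) = 1`,
`tr(a g_n) = z·tr(a)` and `tr(a (t′_n)^k) = s_k·tr(a)`. -/
structure IsMarkovTrace (tr : ∀ m, H m →ₗ[R] F) : Prop where
  compat : ∀ (m : ℕ) (f : H m →ₐ[R] H (m+1)), IsInclusion f →
    ∀ a : H m, tr (m+1) (f a) = tr m a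
  trace_comm : ∀ (m : ℕ) (a b : H m), tr m (a * b) = tr m (b * a)
  trace_one : ∀ m : ℕ, tr m 1 = 1
  markov : ∀ (m : ℕ) (f : H m →ₐ[R] H (m+1)), IsInclusion f → ∀ a : H m,
    tr (m+1) (f a * pih (m+1) (σ (Fin.last m))) = zF * tr m a
  loop_rule : ∀ (m : ℕ) (f : H m →ₐ[R] H (m+1)), IsInclusion f → ∀ (a : H m) (k : ℤ),
    tr (m+1) (f a * pih (m+1) (tp (m+1) ^ k)) = sF k * tr m a
section Aux

open Finset

/-- `B 0` has no relations. -/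
lemma rels_zero : rels 0 = (∅ : Set (FreeGroup (MBGen 0))) := by
  ext r
  simp only [rels, Set.mem_setOf_eq, Set.mem_empty_iff_false, iff_false]
  rintro (⟨h, -⟩ | ⟨i, -, -⟩ | ⟨i, -, -, -⟩ | ⟨i, -, -, -⟩)
  · exact absurd h (lt_irrefl 0)
  all_goals exact i.elim0

/-- The natural inclusion of groups `B 0 →* B 1`. -/
def iota01 : B 0 →* B 1 :=
  PresentedGroup.toGroup (f := fun g : MBGen 0 =>
      Option.rec τ (fun i => i.elim0) g)
    (by intro r hr; rw [rels_zero] at hr; exact absurd hr (Set.notMem_empty r))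

lemma iota01_tau : iota01 τ = τ := PresentedGroup.toGroup.of _

lemma iota01_grpIncl : IsGrpIncl iota01 := ⟨iota01_tau, fun i => i.elim0⟩

/-- The natural inclusion of algebras `H 0 →ₐ[R] H 1`. -/
noncomputable def f01 : H 0 →ₐ[R] H 1 :=
  RingQuot.liftAlgHom R ⟨(RingQuot.mkAlgHom R (heckeRel 1)).comp
      (MonoidAlgebra.mapDomainAlgHom R R iota01),
    by rintro x y ⟨i⟩; exact i.elim0⟩

lemma pih_eq (m : ℕ) (x : B m) :
    pih m x = RingQuot.mkAlgHom R (heckeRel m) (MonoidAlgebra.of R (B m) x) := by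
  rw [pih]
  simp only [MonoidHom.comp_apply, RingHom.toMonoidHom_eq_coe, MonoidHom.coe_coe]
  rw [← RingQuot.mkAlgHom_coe R (heckeRel m)]
  rfl

lemma f01_pih (x : B 0) : f01 (pih 0 x) = pih 1 (iota01 x) := by
  rw [pih_eq, f01, RingQuot.liftAlgHom_mkAlgHom_apply, AlgHom.comp_apply]
  rw [pih_eq]
  congr 1
  show MonoidAlgebra.mapDomain iota01 (MonoidAlgebra.of R (B 0) x) = _
  rw [MonoidAlgebra.of_apply, MonoidAlgebra.of_apply, MonoidAlgebra.mapDomain_single]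

lemma f01_incl : IsInclusion f01 := ⟨iota01, iota01_grpIncl, f01_pih⟩

end Aux
section Aux2

open Finset

/-- `σ₁` in `B 1`. -/
def s1 : B 1 := σ (⟨0, Nat.zero_lt_one⟩ : Fin 1)

lemma sig_one_eq : (sig 1 : B 1) = s1 := by
  rw [sig, dif_pos ⟨le_refl 1, Nat.zero_lt_one⟩]; rfl

lemma tt_one_eq : (tt 1 : B 1) = s1 * τ * s1 := by
  rw [tt, tt, sig_one_eq]

lemma braid_rel : s1 * τ * s1 * τ = τ * s1 * τ * s1 := by
  set r : FreeGroup (MBGen 1) :=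
    (FreeGroup.of (some ⟨0, Nat.zero_lt_one⟩) * FreeGroup.of none) ^ 2 *
      ((FreeGroup.of (none : MBGen 1) * FreeGroup.of (some ⟨0, Nat.zero_lt_one⟩)) ^ 2)⁻¹ with hr
  have hmem : r ∈ rels 1 := Or.inl ⟨Nat.zero_lt_one, rfl⟩
  have h1 : PresentedGroup.mk (rels 1) r = 1 :=
    (QuotientGroup.eq_one_iff r).mpr (Subgroup.subset_normalClosure hmem)
  rw [hr] at h1
  simp only [map_mul, map_pow, map_inv] at h1
  have h2 : (s1 * τ) ^ 2 * ((τ * s1) ^ 2)⁻¹ = 1 := h1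
  have h3 : (s1 * τ) ^ 2 = (τ * s1) ^ 2 := by
    rwa [mul_inv_eq_one] at h2
  calc s1 * τ * s1 * τ = (s1 * τ) ^ 2 := by rw [pow_two]; group
    _ = (τ * s1) ^ 2 := h3
    _ = τ * s1 * τ * s1 := by rw [pow_two]; group

lemma tau_tt_comm : (τ : B 1) * tt 1 = tt 1 * τ := by
  rw [tt_one_eq]
  calc τ * (s1 * τ * s1) = (τ * s1 * τ * s1) := by group
    _ = s1 * τ * s1 * τ := braid_rel.symm

/-- The image of `σ₁` in `H 1`. -/
noncomputable def Gg : H 1 := pih 1 s1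
/-- The image of `t` in `H 1`. -/
noncomputable def Tt : H 1 := pih 1 τ
/-- The image of `t₁` in `H 1`. -/
noncomputable def Uu : H 1 := pih 1 (tt 1)

lemma Uu_eq : Uu = Gg * Tt * Gg := by
  rw [Uu, tt_one_eq, map_mul, map_mul]; rfl

lemma TU_comm : Tt * Uu = Uu * Tt := by
  rw [Tt, Uu, ← map_mul, ← map_mul, tau_tt_comm]

lemma quad : Gg * Gg = (qq - 1) • Gg + qq • (1 : H 1) := by
  have h := RingQuot.mkAlgHom_rel R (heckeRel.quad (m := 1) ⟨0, Nat.zero_lt_one⟩)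
  rw [map_mul, map_add, map_smul, map_smul, map_one] at h
  rw [Gg, s1, pih_eq]
  exact h

end Aux2
section Aux3

open Finset

lemma Uu_eq' : Uu = Gg * (Tt * Gg) := by rw [Uu_eq, mul_assoc]

lemma quad' (x : H 1) : Gg * (Gg * x) = (qq - 1) • (Gg * x) + qq • x := by
  rw [← mul_assoc, quad, add_mul, smul_mul_assoc, smul_mul_assoc, one_mul]

lemma GU_rec : Gg * Uu = (qq - 1) • Uu + qq • (Tt * Gg) := by
  rw [Uu_eq', quad', ← Uu_eq']

lemma UG_rec : Uu * Gg = (qq - 1) • Uu + qq • (Gg * Tt) := by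
  rw [Uu_eq, mul_assoc (Gg * Tt) Gg Gg, quad, mul_add, mul_smul_comm, mul_smul_comm,
    mul_one]

lemma TU_pow_comm (a b : ℕ) : Tt ^ a * Uu ^ b = Uu ^ b * Tt ^ a :=
  (Commute.pow_pow (TU_comm) a b)

lemma L1 : ∀ j : ℕ, Gg * Uu ^ j =
    (∑ i ∈ range j, ((qq - 1) * qq ^ i) • (Tt ^ i * Uu ^ (j - i))) + qq ^ j • (Tt ^ j * Gg) := by
  intro j
  induction j with
  | zero => simp
  | succ n ih =>
    have key : Gg * Uu ^ (n+1) = (qq - 1) • Uu ^ (n+1) + qq • (Tt * (Gg * Uu ^ n)) := by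
      rw [pow_succ' Uu n, ← mul_assoc, GU_rec, add_mul, smul_mul_assoc, smul_mul_assoc,
        mul_assoc, ← pow_succ' Uu n]
    rw [key, ih, mul_add, Finset.mul_sum, smul_add, Finset.smul_sum]
    have hsum : ∑ i ∈ range n, qq • (Tt * ((qq - 1) * qq ^ i) • (Tt ^ i * Uu ^ (n - i))) =
        ∑ i ∈ range n, ((qq - 1) * qq ^ (i+1)) • (Tt ^ (i+1) * Uu ^ (n + 1 - (i+1))) := by
      refine Finset.sum_congr rfl fun i hi => ?_
      rw [mul_smul_comm, smul_smul, ← mul_assoc Tt (Tt ^ i), ← pow_succ' Tt i]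
      have : n + 1 - (i+1) = n - i := by omega
      rw [this]
      congr 1
      ring
    rw [hsum]
    have hlast : qq • (Tt * (qq:R) ^ n • (Tt ^ n * Gg)) = qq ^ (n+1) • (Tt ^ (n+1) * Gg) := by
      rw [mul_smul_comm, smul_smul, ← mul_assoc Tt (Tt ^ n), ← pow_succ' Tt n, ← pow_succ' qq n]
    rw [hlast, Finset.sum_range_succ']
    have h0 : ((qq - 1) * qq ^ 0) • (Tt ^ 0 * Uu ^ (n + 1 - 0)) = (qq - 1) • Uu ^ (n+1) := by
      simp
    rw [h0]
    abel

lemma L2 : ∀ j : ℕ, Uu ^ j * Gg =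
    (∑ p ∈ range j, ((qq - 1) * qq ^ p) • (Tt ^ p * Uu ^ (j - p))) + qq ^ j • (Gg * Tt ^ j) := by
  intro j
  induction j with
  | zero => simp
  | succ n ih =>
    have key : Uu ^ (n+1) * Gg = (qq - 1) • Uu ^ (n+1) + qq • ((Uu ^ n * Gg) * Tt) := by
      rw [pow_succ Uu n, mul_assoc, UG_rec, mul_add, mul_smul_comm, mul_smul_comm,
        ← pow_succ, ← mul_assoc]
    rw [key, ih, add_mul, Finset.sum_mul, smul_add, Finset.smul_sum]
    have hsum : ∑ p ∈ range n, qq • (((qq - 1) * qq ^ p) • (Tt ^ p * Uu ^ (n - p)) * Tt) =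
        ∑ p ∈ range n, ((qq - 1) * qq ^ (p+1)) • (Tt ^ (p+1) * Uu ^ (n + 1 - (p+1))) := by
      refine Finset.sum_congr rfl fun p hp => ?_
      rw [smul_mul_assoc, smul_smul, mul_assoc (Tt ^ p) (Uu ^ (n - p)) Tt]
      have hc : Uu ^ (n - p) * Tt = Tt * Uu ^ (n - p) := by
        have h := TU_pow_comm 1 (n - p)
        rw [pow_one] at h
        exact h.symm
      rw [hc, ← mul_assoc (Tt ^ p) Tt, ← pow_succ Tt p]
      have : n + 1 - (p+1) = n - p := by omega
      rw [this]
      congr 1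
      ring
    rw [hsum]
    have hlast : qq • ((qq:R) ^ n • (Gg * Tt ^ n) * Tt) = qq ^ (n+1) • (Gg * Tt ^ (n+1)) := by
      rw [smul_mul_assoc, smul_smul, mul_assoc Gg (Tt ^ n) Tt, ← pow_succ Tt n, ← pow_succ' qq n]
    rw [hlast, Finset.sum_range_succ']
    have h0 : ((qq - 1) * qq ^ 0) • (Tt ^ 0 * Uu ^ (n + 1 - 0)) = (qq - 1) • Uu ^ (n+1) := by
      simp
    rw [h0]
    abel

end Aux3
section Aux4

open Finset

variable (tr : ∀ m, H m →ₗ[R] F)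

lemma tr_compat_pow (htr : IsMarkovTrace tr) (n : ℕ) : tr 0 (pih 0 (τ ^ n)) = tr 1 (Tt ^ n) := by
  have h := htr.compat 0 f01 f01_incl (pih 0 (τ ^ n))
  rw [f01_pih, map_pow, iota01_tau, map_pow] at h
  exact h.symm

lemma tr_TG (htr : IsMarkovTrace tr) (n : ℕ) : tr 1 (Tt ^ n * Gg) = zF * tr 1 (Tt ^ n) := by
  have hm := htr.markov 0 f01 f01_incl (pih 0 (τ ^ n))
  rw [f01_pih, map_pow, iota01_tau, map_pow, tr_compat_pow tr htr] at hm
  have hσ : (σ (Fin.last 0) : B 1) = s1 := rfl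
  rw [hσ] at hm
  exact hm

lemma tr_GTG (htr : IsMarkovTrace tr) (n : ℕ) :
    tr 1 (Gg * (Tt ^ n * Gg)) = (qq - 1) • (zF * tr 1 (Tt ^ n)) + qq • tr 1 (Tt ^ n) := by
  rw [htr.trace_comm 1 Gg (Tt ^ n * Gg), mul_assoc, quad, mul_add, mul_smul_comm,
    mul_smul_comm, mul_one, map_add, map_smul, map_smul, tr_TG tr htr]

lemma tr_GTU (htr : IsMarkovTrace tr) (i j k : ℕ) (hijk : j + (i + 1) = k) :
    tr 1 (Gg * (Tt ^ (i+1) * Uu ^ j)) =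
      (∑ p ∈ range j, ((qq - 1) * qq ^ p) • tr 1 (Tt ^ (i+1+p) * Uu ^ (j - p))) +
        qq ^ j • (zF * tr 1 (Tt ^ k)) := by
  rw [htr.trace_comm 1 Gg (Tt ^ (i+1) * Uu ^ j), mul_assoc, L2 j, mul_add, Finset.mul_sum,
    map_add, map_sum]
  congr 1
  · refine Finset.sum_congr rfl fun p hp => ?_
    rw [mul_smul_comm, map_smul, ← mul_assoc, ← pow_add]
  · rw [mul_smul_comm, map_smul]
    congr 1
    rw [← mul_assoc, htr.trace_comm 1 (Tt ^ (i+1) * Gg) (Tt ^ j), ← mul_assoc, ← pow_add,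
      hijk, tr_TG tr htr]

lemma main_nat (htr : IsMarkovTrace tr) (k : ℕ) (hk : 1 ≤ k) :
    tr 1 (Uu ^ k) =
      (∑ i ∈ range (k-1), ((qq - 1) * qq ^ i) •
          ((∑ p ∈ range (k-1-i), ((qq - 1) * qq ^ p) •
              tr 1 (Tt ^ (i+1+p) * Uu ^ (k-1-i-p))) +
            qq ^ (k-1-i) • (zF * tr 1 (Tt ^ k)))) +
        qq ^ (k-1) • ((qq - 1) • (zF * tr 1 (Tt ^ k)) + qq • tr 1 (Tt ^ k)) := by
  obtain ⟨n, rfl⟩ : ∃ n, k = n + 1 := ⟨k - 1, by omega⟩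
  have hexp : Uu ^ (n+1) = Gg * (Tt * (Gg * Uu ^ n)) := by
    rw [pow_succ' Uu n, Uu_eq', mul_assoc, mul_assoc]
  rw [hexp, L1 n, mul_add, mul_add, Finset.mul_sum, Finset.mul_sum, map_add, map_sum]
  have h1 : ∀ i ∈ range n,
      tr 1 (Gg * (Tt * ((qq - 1) * qq ^ i) • (Tt ^ i * Uu ^ (n - i)))) =
      ((qq - 1) * qq ^ i) •
        ((∑ p ∈ range (n - i), ((qq - 1) * qq ^ p) •
            tr 1 (Tt ^ (i+1+p) * Uu ^ (n-i-p))) +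
          qq ^ (n-i) • (zF * tr 1 (Tt ^ (n+1)))) := by
    intro i hi
    have hin : i < n := Finset.mem_range.mp hi
    rw [mul_smul_comm, mul_smul_comm, map_smul]
    congr 1
    have hTT : Tt * (Tt ^ i * Uu ^ (n - i)) = Tt ^ (i+1) * Uu ^ (n - i) := by
      rw [← mul_assoc, ← pow_succ' Tt i]
    rw [hTT, tr_GTU tr htr i (n - i) (n+1) (by omega)]
  have h2 : tr 1 (Gg * (Tt * (qq:R) ^ n • (Tt ^ n * Gg))) =
      qq ^ n • ((qq - 1) • (zF * tr 1 (Tt ^ (n+1))) + qq • tr 1 (Tt ^ (n+1))) := by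
    rw [mul_smul_comm, mul_smul_comm, map_smul]
    congr 1
    have hTT : Tt * (Tt ^ n * Gg) = Tt ^ (n+1) * Gg := by
      rw [← mul_assoc, ← pow_succ' Tt n]
    rw [hTT, tr_GTG tr htr (n+1)]
  rw [Finset.sum_congr rfl h1, h2]
  simp only [Nat.add_sub_cancel]

end Aux4
section Aux5

open Finset

lemma alg_qq : algebraMap R F qq = qF := rfl

lemma final_alg (k : ℕ) (hk : 1 ≤ k) (A : ℕ → ℕ → F) (W : F) :
    (∑ i ∈ range (k-1), ((qq - 1) * qq ^ i) •
        ((∑ p ∈ range (k-1-i), ((qq - 1) * qq ^ p) • A i p) + qq ^ (k-1-i) • (zF * W))) +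
      qq ^ (k-1) • ((qq - 1) • (zF * W) + qq • W) =
    (qF - 1) ^ 2 * (∑ i ∈ range (k-1), ∑ p ∈ range (k-1-i), qF ^ (i+p) * A i p) +
      (k : F) * (qF - 1) * qF ^ (k-1) * zF * W + qF ^ k * W := by
  have key : ∀ (c : R) (x : F), c • x = algebraMap R F c * x := fun c x => Algebra.smul_def c x
  have trans1 : (∑ i ∈ range (k-1), ((qq - 1) * qq ^ i) •
        ((∑ p ∈ range (k-1-i), ((qq - 1) * qq ^ p) • A i p) + qq ^ (k-1-i) • (zF * W))) +
      qq ^ (k-1) • ((qq - 1) • (zF * W) + qq • W) =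
      (∑ i ∈ range (k-1), ((∑ p ∈ range (k-1-i), (qF - 1) ^ 2 * (qF ^ (i+p) * A i p)) +
          (qF - 1) * qF ^ (k-1) * zF * W)) +
        ((qF - 1) * qF ^ (k-1) * zF * W + qF ^ k * W) := by
    congr 1
    · refine Finset.sum_congr rfl fun i hi => ?_
      have hik : i < k - 1 := mem_range.mp hi
      rw [smul_add, Finset.smul_sum]
      congr 1
      · refine Finset.sum_congr rfl fun p hp => ?_
        rw [smul_smul, key, map_mul, map_mul, map_mul, map_sub, map_one, map_pow, map_pow,
          alg_qq, pow_add]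
        ring
      · rw [smul_smul, key, map_mul, map_mul, map_pow, map_pow, map_sub, map_one, alg_qq]
        have hip : i + (k - 1 - i) = k - 1 := by omega
        rw [mul_assoc (qF - 1), ← pow_add, hip]
        ring
    · rw [smul_add, smul_smul, smul_smul, key, key, map_mul, map_pow, map_sub, map_one,
        map_mul, map_pow, alg_qq]
      have hpow : qF ^ (k-1) * qF = qF ^ k := by
        rw [← pow_succ]
        congr 1
        omega
      linear_combination W * hpow
  rw [trans1, Finset.sum_add_distrib, Finset.sum_const, card_range]
  simp only [Finset.mul_sum]
  rw [nsmul_eq_mul, Nat.cast_sub hk, Nat.cast_one]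
  ring

end Aux5
theorem trace_of_t1_power (tr : ∀ m, H m →ₗ[R] F) (htr : IsMarkovTrace tr)
    (k : ℕ) (hk : 1 ≤ k) :
    tr 1 (pih 1 (tt 1 ^ (k : ℤ))) =
      (qF - 1) ^ 2 *
          (∑ j ∈ Finset.range (k-1), ∑ f ∈ Finset.range (k-1-j),
            qF ^ (j + f) *
              tr 1 (pih 1 (tt 0 ^ ((j : ℤ) + 1 + (f : ℤ)) *
                tt 1 ^ ((k : ℤ) - 1 - (j : ℤ) - (f : ℤ))))) +
        (k : F) * (qF - 1) * qF ^ (k-1) * zF * tr 1 (pih 1 (tt 0 ^ (k : ℤ))) +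
        qF ^ k * tr 1 (pih 1 (tt 0 ^ (k : ℤ))) := by
  have hUu : Uu = pih 1 (tt 1) := rfl
  have hTt : Tt = pih 1 (tt 0) := rfl
  have e1 : pih 1 (tt 1 ^ (k : ℤ)) = Uu ^ k := by rw [zpow_natCast, map_pow, hUu]
  have e2 : pih 1 (tt 0 ^ (k : ℤ)) = Tt ^ k := by rw [zpow_natCast, map_pow, hTt]
  have e3 : ∀ j ∈ Finset.range (k-1), ∀ f ∈ Finset.range (k-1-j),
      pih 1 (tt 0 ^ ((j : ℤ) + 1 + (f : ℤ)) * tt 1 ^ ((k : ℤ) - 1 - (j : ℤ) - (f : ℤ))) =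
        Tt ^ (j+1+f) * Uu ^ (k-1-j-f) := by
    intro j hj f hf
    have hj' := Finset.mem_range.mp hj
    have hf' := Finset.mem_range.mp hf
    have c1 : (j : ℤ) + 1 + (f : ℤ) = ((j + 1 + f : ℕ) : ℤ) := by push_cast; ring
    have c2 : (k : ℤ) - 1 - (j : ℤ) - (f : ℤ) = ((k - 1 - j - f : ℕ) : ℤ) := by omega
    rw [c1, c2, zpow_natCast, zpow_natCast, map_mul, map_pow, map_pow, ← hUu, ← hTt]
  have e4 : (∑ j ∈ Finset.range (k-1), ∑ f ∈ Finset.range (k-1-j),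
        qF ^ (j + f) *
          tr 1 (pih 1 (tt 0 ^ ((j : ℤ) + 1 + (f : ℤ)) *
            tt 1 ^ ((k : ℤ) - 1 - (j : ℤ) - (f : ℤ))))) =
      ∑ j ∈ Finset.range (k-1), ∑ f ∈ Finset.range (k-1-j),
        qF ^ (j + f) * tr 1 (Tt ^ (j+1+f) * Uu ^ (k-1-j-f)) :=
    Finset.sum_congr rfl fun j hj => Finset.sum_congr rfl fun f hf => by rw [e3 j hj f hf]
  rw [e1, e2, e4, main_nat tr htr k hk]
  exact final_alg k hk (fun j f => tr 1 (Tt ^ (j+1+f) * Uu ^ (k-1-j-f))) (tr 1 (Tt ^ k))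

end MB
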